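/- There is a unique ring homomorphism I : k[δ_∞] → k̂[δ_∞] such that for all pairs (M,N) and (m,n) with M ≥ m and N ≥ n, and all y ∈ k[δ_{M,N}], the (m,n)-component of I(r_{(M,N)}(y)) equals e_{(M,N,m,n)}(y). Moreover I is injective. -/

import Mathlib

open MvPolynomial

set_option maxHeartbeats 2000000
set_option synthInstance.maxHeartbeats 400000

noncomputable section

/-- Row indices of the generic `(m+n) × m` matrix: integers `-m, ..., n-1`. -/
abbrev RowI (m n : ℕ) : Type := ↥(Finset.Icc (-(m : ℤ)) ((n : ℤ) - 1))

/-- Column indices: integers `-m, ..., -1`. -/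
abbrev ColI (m : ℕ) : Type := ↥(Finset.Icc (-(m : ℤ)) (-1 : ℤ))

/-- `k[a]_{m,n}`, the coordinate ring of generic `(m+n) × m` matrices. -/
abbrev MatRing (k : Type) [Field k] (m n : ℕ) : Type :=
  MvPolynomial (RowI m n × ColI m) k

/-- The maximal minor `d_I` on the rows in `I` (an `m`-element subset of `{-m,...,n-1}`). -/
def dMinor (k : Type) [Field k] (m n : ℕ) (I : Finset ℤ) (hI : I.card = m)
    (hsub : I ⊆ Finset.Icc (-(m : ℤ)) ((n : ℤ) - 1)) : MatRing k m n :=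
  Matrix.det (Matrix.of fun s t : Fin m =>
    (X (⟨I.orderEmbOfFin hI s, hsub (Finset.orderEmbOfFin_mem I hI s)⟩,
       ⟨-(m : ℤ) + (t : ℕ), by
          have := t.2
          simp only [Finset.mem_Icc]
          omega⟩) : MatRing k m n))

/-- `k[δ_{m,n}]`, the subalgebra generated by all the maximal minors. -/
def DeltaSub (k : Type) [Field k] (m n : ℕ) : Subalgebra k (MatRing k m n) :=
  Algebra.adjoin k {x | ∃ I hI hsub, x = dMinor k m n I hI hsub}

/-- The substitution homomorphism `E_{(m',n',m,n)} : k[a]_{m',n'} → k[a]_{m,n}`. -/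
def Emap (k : Type) [Field k] (m n m' n' : ℕ) : MatRing k m' n' →ₐ[k] MatRing k m n :=
  aeval fun p : RowI m' n' × ColI m' =>
    if h : (p.1.1 ∈ Finset.Icc (-(m : ℤ)) ((n : ℤ) - 1)) ∧
        (p.2.1 ∈ Finset.Icc (-(m : ℤ)) (-1 : ℤ)) then
      (X (⟨p.1.1, h.1⟩, ⟨p.2.1, h.2⟩) : MatRing k m n)
    else if p.1.1 = p.2.1 then 1 else 0


/-- The inverse limit of an inverse system of rings, realized concretely as the
subring of the product consisting of the compatible families. -/
def ringInvLim {ι : Type*} [Preorder ι] (G : ι → Type*) [∀ i, Ring (G i)]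
    (f : ∀ i j : ι, i ≤ j → (G j →+* G i)) : Subring (∀ i, G i) where
  carrier := {x | ∀ (i j : ι) (h : i ≤ j), f i j h (x j) = x i}
  zero_mem' := by intro i j h; simp
  one_mem' := by intro i j h; simp
  add_mem' := by
    intro a b ha hb i j h
    simp only [Pi.add_apply, map_add, ha i j h, hb i j h]
  mul_mem' := by
    intro a b ha hb i j h
    simp only [Pi.mul_apply, map_mul, ha i j h, hb i j h]
  neg_mem' := by
    intro a ha i j h
    simp only [Pi.neg_apply, map_neg, ha i j h]

/-- The index set: pairs of positive integers, ordered componentwise. -/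
abbrev PIdx : Type := {p : ℕ × ℕ // 0 < p.1 ∧ 0 < p.2}

/-- `e_{(m',n',m,n)}` viewed as a map `k[δ_{m',n'}] → k[δ_{m,n}]`: its defining property
is that it is the restriction of the substitution homomorphism `E_{(m',n',m,n)}`. -/
def eProp (k : Type) [Field k]
    (eD : ∀ p q : PIdx, p ≤ q →
      (↥(DeltaSub k q.1.1 q.1.2) →ₐ[k] ↥(DeltaSub k p.1.1 p.1.2))) : Prop :=
  ∀ (p q : PIdx) (h : p ≤ q) (x : ↥(DeltaSub k q.1.1 q.1.2)),
    (eD p q h x : MatRing k p.1.1 p.1.2) =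
      Emap k p.1.1 p.1.2 q.1.1 q.1.2 (x : MatRing k q.1.1 q.1.2)

/-- The defining property of the system of maps `r_{(m,n,m',n')}` on maximal minors. -/
def rSysProp (k : Type) [Field k]
    (rS : ∀ p q : PIdx, p ≤ q →
      (↥(DeltaSub k p.1.1 p.1.2) →ₐ[k] ↥(DeltaSub k q.1.1 q.1.2))) : Prop :=
  ∀ (p q : PIdx) (h : p ≤ q) (I : Finset ℤ) (hI : I.card = p.1.1)
    (hsub : I ⊆ Finset.Icc (-(p.1.1 : ℤ)) ((p.1.2 : ℤ) - 1))
    (hmem : dMinor k p.1.1 p.1.2 I hI hsub ∈ DeltaSub k p.1.1 p.1.2)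
    (hcard : (Finset.Icc (-(q.1.1 : ℤ)) (-(p.1.1 : ℤ) - 1) ∪ I).card = q.1.1)
    (hsub' : Finset.Icc (-(q.1.1 : ℤ)) (-(p.1.1 : ℤ) - 1) ∪ I ⊆
      Finset.Icc (-(q.1.1 : ℤ)) ((q.1.2 : ℤ) - 1)),
    (rS p q h ⟨dMinor k p.1.1 p.1.2 I hI hsub, hmem⟩ : MatRing k q.1.1 q.1.2) =
      dMinor k q.1.1 q.1.2 (Finset.Icc (-(q.1.1 : ℤ)) (-(p.1.1 : ℤ) - 1) ∪ I) hcard hsub'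

section Aux
variable (k : Type) [Field k]

lemma dMinor_mem (m n : ℕ) (I : Finset ℤ) (hI : I.card = m)
    (hsub : I ⊆ Finset.Icc (-(m : ℤ)) ((n : ℤ) - 1)) :
    dMinor k m n I hI hsub ∈ DeltaSub k m n :=
  Algebra.subset_adjoin ⟨I, hI, hsub, rfl⟩

lemma dMinor_congr (m n : ℕ) (I I' : Finset ℤ) (h : I = I') (hI : I.card = m)
    (hsub : I ⊆ Finset.Icc (-(m : ℤ)) ((n : ℤ) - 1)) (hI' : I'.card = m)
    (hsub' : I' ⊆ Finset.Icc (-(m : ℤ)) ((n : ℤ) - 1)) :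
    dMinor k m n I hI hsub = dMinor k m n I' hI' hsub' := by
  subst h; rfl

lemma emap_self (m n : ℕ) (x : MatRing k m n) : Emap k m n m n x = x := by
  have : Emap k m n m n = AlgHom.id k (MatRing k m n) := by
    apply MvPolynomial.algHom_ext
    intro v
    simp only [Emap, aeval_X, AlgHom.id_apply]
    rw [dif_pos ⟨v.1.2, v.2.2⟩]
  rw [this]; rfl

lemma emap_comp (m n m' n' m'' n'' : ℕ) (h1 : m ≤ m') (h2 : n ≤ n') (h3 : m' ≤ m'')
    (h4 : n' ≤ n'') (x : MatRing k m'' n'') :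
    Emap k m n m' n' (Emap k m' n' m'' n'' x) = Emap k m n m'' n'' x := by
  have : (Emap k m n m' n').comp (Emap k m' n' m'' n'') = Emap k m n m'' n'' := by
    apply MvPolynomial.algHom_ext
    intro v
    simp only [AlgHom.comp_apply]
    rw [show (Emap k m' n' m'' n'') (X v) = _ from aeval_X _ v]
    rw [show (Emap k m n m'' n'') (X v) = _ from aeval_X _ v]
    by_cases hA : (v.1.1 ∈ Finset.Icc (-(m : ℤ)) ((n : ℤ) - 1)) ∧
        (v.2.1 ∈ Finset.Icc (-(m : ℤ)) (-1 : ℤ))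
    · have hA' : (v.1.1 ∈ Finset.Icc (-(m' : ℤ)) ((n' : ℤ) - 1)) ∧
          (v.2.1 ∈ Finset.Icc (-(m' : ℤ)) (-1 : ℤ)) := by
        obtain ⟨ha, hb⟩ := hA
        simp only [Finset.mem_Icc] at *
        constructor <;> constructor <;> [skip; skip; skip; skip] <;> omega
      rw [dif_pos hA', dif_pos hA]
      rw [show (Emap k m n m' n') (X _) = _ from aeval_X _ _]
      rw [dif_pos hA]
    · rw [dif_neg hA]
      by_cases hA' : (v.1.1 ∈ Finset.Icc (-(m' : ℤ)) ((n' : ℤ) - 1)) ∧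
          (v.2.1 ∈ Finset.Icc (-(m' : ℤ)) (-1 : ℤ))
      · rw [dif_pos hA']
        rw [show (Emap k m n m' n') (X _) = _ from aeval_X _ _]
        rw [dif_neg hA]
      · rw [dif_neg hA']
        split_ifs <;> simp
  calc Emap k m n m' n' (Emap k m' n' m'' n'' x)
      = ((Emap k m n m' n').comp (Emap k m' n' m'' n'')) x := rfl
    _ = Emap k m n m'' n'' x := by rw [this]

end Aux
section Aux2
variable (k : Type) [Field k]

lemma icc_card (m M : ℕ) (hm : m ≤ M) :
    (Finset.Icc (-(M : ℤ)) (-(m : ℤ) - 1)).card = M - m := by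
  rw [Int.card_Icc]; omega

lemma union_card (m n M : ℕ) (hm : m ≤ M) (I : Finset ℤ) (hI : I.card = m)
    (hsub : I ⊆ Finset.Icc (-(m : ℤ)) ((n : ℤ) - 1)) :
    (Finset.Icc (-(M : ℤ)) (-(m : ℤ) - 1) ∪ I).card = M := by
  rw [Finset.card_union_of_disjoint, icc_card m M hm, hI]
  · omega
  · rw [Finset.disjoint_left]
    intro a ha ha'
    have h1 := Finset.mem_Icc.1 ha
    have h2 := Finset.mem_Icc.1 (hsub ha')
    omega

lemma union_sub (m n M N : ℕ) (hm : m ≤ M) (hn : n ≤ N) (I : Finset ℤ)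
    (hsub : I ⊆ Finset.Icc (-(m : ℤ)) ((n : ℤ) - 1)) :
    Finset.Icc (-(M : ℤ)) (-(m : ℤ) - 1) ∪ I ⊆
      Finset.Icc (-(M : ℤ)) ((N : ℤ) - 1) := by
  intro a ha
  rcases Finset.mem_union.1 ha with h | h
  · have := Finset.mem_Icc.1 h; simp only [Finset.mem_Icc]; omega
  · have := Finset.mem_Icc.1 (hsub h); simp only [Finset.mem_Icc]; omega

lemma emap_dMinor (m n M N : ℕ) (hm : m ≤ M) (hn : n ≤ N) (I : Finset ℤ)
    (hI : I.card = m) (hsub : I ⊆ Finset.Icc (-(m : ℤ)) ((n : ℤ) - 1))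
    (hJc : (Finset.Icc (-(M : ℤ)) (-(m : ℤ) - 1) ∪ I).card = M)
    (hJs : Finset.Icc (-(M : ℤ)) (-(m : ℤ) - 1) ∪ I ⊆
      Finset.Icc (-(M : ℤ)) ((N : ℤ) - 1)) :
    Emap k m n M N (dMinor k M N (Finset.Icc (-(M : ℤ)) (-(m : ℤ) - 1) ∪ I) hJc hJs) =
      dMinor k m n I hI hsub := by
  classical
  -- the order embedding of J is explicit
  have hf : ∀ s : Fin M, (Finset.Icc (-(M : ℤ)) (-(m : ℤ) - 1) ∪ I).orderEmbOfFin hJc s =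
      (fun s : Fin M => if h : (s : ℕ) < M - m then (-(M : ℤ) + (s : ℕ))
        else I.orderEmbOfFin hI ⟨(s : ℕ) - (M - m), by omega⟩) s := by
    intro s
    have := Finset.orderEmbOfFin_unique (f := fun s : Fin M =>
        if h : (s : ℕ) < M - m then (-(M : ℤ) + (s : ℕ))
        else I.orderEmbOfFin hI ⟨(s : ℕ) - (M - m), by omega⟩) hJc ?_ ?_
    · exact (congrFun this s).symm
    · intro x
      by_cases h : (x : ℕ) < M - m
      · rw [dif_pos h]
        apply Finset.mem_union_left
        simp only [Finset.mem_Icc]; omega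
      · rw [dif_neg h]
        exact Finset.mem_union_right _ (Finset.orderEmbOfFin_mem I hI _)
    · intro x y hxy
      dsimp only
      have hIlb : ∀ j, -(m : ℤ) ≤ I.orderEmbOfFin hI j := fun j =>
        (Finset.mem_Icc.1 (hsub (Finset.orderEmbOfFin_mem I hI j))).1
      by_cases hx : (x : ℕ) < M - m <;> by_cases hy : (y : ℕ) < M - m
      · rw [dif_pos hx, dif_pos hy]
        have : (x : ℕ) < (y : ℕ) := hxy
        omega
      · rw [dif_pos hx, dif_neg hy]
        have := hIlb ⟨(y : ℕ) - (M - m), by omega⟩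
        omega
      · exact absurd (lt_trans (show (x:ℕ) < (y:ℕ) from hxy) y.2) (by omega)
      · rw [dif_neg hx, dif_neg hy]
        apply (I.orderEmbOfFin hI).strictMono
        have : (x : ℕ) < (y : ℕ) := hxy
        exact Fin.mk_lt_mk.2 (by omega)
  -- the reindexing
  have hMm : (M - m) + m = M := by omega
  let e : Fin (M - m) ⊕ Fin m ≃ Fin M := finSumFinEquiv.trans (finCongr hMm)
  have he1 : ∀ a : Fin (M - m), ((e (Sum.inl a)) : ℕ) = (a : ℕ) := by
    intro a; simp [e, finSumFinEquiv]
  have he2 : ∀ b : Fin m, ((e (Sum.inr b)) : ℕ) = (M - m) + (b : ℕ) := by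
    intro b; simp [e, finSumFinEquiv]
  rw [dMinor, dMinor, show (Emap k m n M N : MatRing k M N → MatRing k m n) =
    (Emap k m n M N).toRingHom from rfl, RingHom.map_det]
  rw [← Matrix.det_submatrix_equiv_self e]
  have hdet : ∀ (A : Matrix (Fin (M - m) ⊕ Fin m) (Fin (M - m) ⊕ Fin m) (MatRing k m n))
      (D : Matrix (Fin m) (Fin m) (MatRing k m n)),
      (∀ i j, A (Sum.inl i) (Sum.inl j) = (1 : Matrix (Fin (M - m)) (Fin (M - m)) (MatRing k m n)) i j) →
      (∀ i j, A (Sum.inl i) (Sum.inr j) = 0) →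
      (∀ i j, A (Sum.inr i) (Sum.inl j) = 0) →
      (∀ i j, A (Sum.inr i) (Sum.inr j) = D i j) → A.det = D.det := by
    intro A D h11 h12 h21 h22
    have hA : A = Matrix.fromBlocks 1 0 0 D := by
      ext i j
      rcases i with a | a <;> rcases j with b | b <;>
        simp [Matrix.fromBlocks_apply₁₁, Matrix.fromBlocks_apply₁₂,
          Matrix.fromBlocks_apply₂₁, Matrix.fromBlocks_apply₂₂, h11, h12, h21, h22]
    rw [hA, Matrix.det_fromBlocks_zero₂₁, Matrix.det_one, one_mul]
  refine hdet _ _ ?_ ?_ ?_ ?_ <;> intro a b <;>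
    simp only [AlgHom.toRingHom_eq_coe, RingHom.coe_coe, RingHom.mapMatrix_apply,
      Matrix.submatrix_apply, Matrix.map_apply, Matrix.of_apply] <;>
    rw [show ∀ (v : RowI M N × ColI M), Emap k m n M N (X v) = _ from fun v => aeval_X _ _]
  · -- top-left : identity block
    have hrow : ((Finset.Icc (-(M : ℤ)) (-(m : ℤ) - 1) ∪ I).orderEmbOfFin hJc (e (Sum.inl a)) : ℤ)
        = -(M : ℤ) + (a : ℕ) := by
      rw [hf]; dsimp only; rw [dif_pos (by rw [he1]; exact a.2)]; rw [he1]
    have ha2 : (a : ℕ) < M - m := a.2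
    have hc1 : ¬ ((((Finset.Icc (-(M : ℤ)) (-(m : ℤ) - 1) ∪ I).orderEmbOfFin hJc (e (Sum.inl a)) : ℤ)
        ∈ Finset.Icc (-(m : ℤ)) ((n : ℤ) - 1)) ∧
        ((-(M : ℤ) + ((e (Sum.inl b)) : ℕ)) ∈ Finset.Icc (-(m : ℤ)) (-1 : ℤ))) := by
      simp only [hrow, Finset.mem_Icc, not_and]
      intro h; exfalso; omega
    rw [dif_neg hc1]
    simp only [hrow, he1, Matrix.one_apply]
    rcases eq_or_ne a b with h | h
    · subst h; simp
    · rw [if_neg, if_neg h]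
      have : (a : ℕ) ≠ (b : ℕ) := fun hc => h (Fin.ext hc)
      omega
  · -- top-right : zero
    have hrow : ((Finset.Icc (-(M : ℤ)) (-(m : ℤ) - 1) ∪ I).orderEmbOfFin hJc (e (Sum.inl a)) : ℤ)
        = -(M : ℤ) + (a : ℕ) := by
      rw [hf]; dsimp only; rw [dif_pos (by rw [he1]; exact a.2)]; rw [he1]
    have ha2 : (a : ℕ) < M - m := a.2
    have hb2 : (b : ℕ) < m := b.2
    have hc1 : ¬ ((((Finset.Icc (-(M : ℤ)) (-(m : ℤ) - 1) ∪ I).orderEmbOfFin hJc (e (Sum.inl a)) : ℤ)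
        ∈ Finset.Icc (-(m : ℤ)) ((n : ℤ) - 1)) ∧
        ((-(M : ℤ) + ((e (Sum.inr b)) : ℕ)) ∈ Finset.Icc (-(m : ℤ)) (-1 : ℤ))) := by
      simp only [hrow, Finset.mem_Icc, not_and]
      intro h; exfalso; omega
    rw [dif_neg hc1, if_neg]
    simp only [hrow, he2]
    push_cast
    omega
  · -- bottom-left : zero
    have hrow : ((Finset.Icc (-(M : ℤ)) (-(m : ℤ) - 1) ∪ I).orderEmbOfFin hJc (e (Sum.inr a)) : ℤ)
        = I.orderEmbOfFin hI a := by
      rw [hf]; dsimp only; rw [dif_neg (by rw [he2]; omega)]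
      congr 1
      apply Fin.ext
      simp [he2]
    have hrmem := Finset.mem_Icc.1 (hsub (Finset.orderEmbOfFin_mem I hI a))
    have hb2 : (b : ℕ) < M - m := b.2
    have hc1 : ¬ ((((Finset.Icc (-(M : ℤ)) (-(m : ℤ) - 1) ∪ I).orderEmbOfFin hJc (e (Sum.inr a)) : ℤ)
        ∈ Finset.Icc (-(m : ℤ)) ((n : ℤ) - 1)) ∧
        ((-(M : ℤ) + ((e (Sum.inl b)) : ℕ)) ∈ Finset.Icc (-(m : ℤ)) (-1 : ℤ))) := by
      simp only [hrow, he1, Finset.mem_Icc, not_and]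
      intro _; omega
    rw [dif_neg hc1, if_neg]
    simp only [hrow, he1]
    omega
  · -- bottom-right : the small minor
    have hrow : ((Finset.Icc (-(M : ℤ)) (-(m : ℤ) - 1) ∪ I).orderEmbOfFin hJc (e (Sum.inr a)) : ℤ)
        = I.orderEmbOfFin hI a := by
      rw [hf]; dsimp only; rw [dif_neg (by rw [he2]; omega)]
      congr 1
      apply Fin.ext
      simp [he2]
    have hrmem := Finset.mem_Icc.1 (hsub (Finset.orderEmbOfFin_mem I hI a))
    have hb2 : (b : ℕ) < m := b.2
    have hc1 : (((Finset.Icc (-(M : ℤ)) (-(m : ℤ) - 1) ∪ I).orderEmbOfFin hJc (e (Sum.inr a)) : ℤ)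
        ∈ Finset.Icc (-(m : ℤ)) ((n : ℤ) - 1)) ∧
        ((-(M : ℤ) + ((e (Sum.inr b)) : ℕ)) ∈ Finset.Icc (-(m : ℤ)) (-1 : ℤ)) := by
      constructor
      · simp only [hrow, Finset.mem_Icc]; omega
      · simp only [he2, Finset.mem_Icc]; push_cast; omega
    rw [dif_pos hc1]
    congr 1
    refine Prod.ext ?_ ?_ <;> apply Subtype.ext
    · exact hrow
    · show (-(M : ℤ) + ((e (Sum.inr b)) : ℕ)) = -(m : ℤ) + (b : ℕ)
      rw [he2]; push_cast; omega
end Aux2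
section Aux3

lemma adjoin_induction_gen {R A : Type*} [CommSemiring R] [Semiring A] [Algebra R A]
    {s : Set A} {p : Algebra.adjoin R s → Prop}
    (mem : ∀ x (h : x ∈ s), p ⟨x, Algebra.subset_adjoin h⟩)
    (alg : ∀ r, p (algebraMap R _ r))
    (add : ∀ x y, p x → p y → p (x + y)) (mul : ∀ x y, p x → p y → p (x * y))
    (x : Algebra.adjoin R s) : p x := by
  obtain ⟨x, hx⟩ := x
  induction hx using Algebra.adjoin_induction with
  | mem x h => exact mem x h
  | algebraMap r => exact alg r
  | add x y hx hy h1 h2 => exact add _ _ h1 h2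
  | mul x y hx hy h1 h2 => exact mul _ _ h1 h2

@[elab_as_elim]
lemma adjoin_induction_sub {k : Type} [Field k] {m n : ℕ} {p : ↥(DeltaSub k m n) → Prop}
    (mem : ∀ x (h : x ∈ {x | ∃ I hI hsub, x = dMinor k m n I hI hsub}),
      p ⟨x, Set.mem_of_subset_of_mem Algebra.subset_adjoin h⟩)
    (alg : ∀ r, p (algebraMap k (DeltaSub k m n) r))
    (add : ∀ x y, p x → p y → p (x + y)) (mul : ∀ x y, p x → p y → p (x * y))
    (x : ↥(DeltaSub k m n)) : p x :=
  adjoin_induction_gen (p := p) (fun x h => mem x h) alg add mul x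

/-- sup in `PIdx` -/
def psup (p q : PIdx) : PIdx :=
  ⟨(max p.1.1 q.1.1, max p.1.2 q.1.2), ⟨lt_max_of_lt_left p.2.1, lt_max_of_lt_left p.2.2⟩⟩

lemma pidx_le_iff (p q : PIdx) : p ≤ q ↔ p.1.1 ≤ q.1.1 ∧ p.1.2 ≤ q.1.2 := by
  rw [← Subtype.coe_le_coe, Prod.le_def]

lemma le_psup_left (p q : PIdx) : p ≤ psup p q :=
  (pidx_le_iff _ _).2 ⟨le_max_left _ _, le_max_left _ _⟩

lemma le_psup_right (p q : PIdx) : q ≤ psup p q :=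
  (pidx_le_iff _ _).2 ⟨le_max_right _ _, le_max_right _ _⟩

instance : Nonempty PIdx := ⟨⟨(1, 1), ⟨one_pos, one_pos⟩⟩⟩

instance : IsDirected PIdx (· ≤ ·) :=
  ⟨fun p q => ⟨psup p q, le_psup_left p q, le_psup_right p q⟩⟩

variable (k : Type) [Field k]
variable (eD : ∀ p q : PIdx, p ≤ q →
      (↥(DeltaSub k q.1.1 q.1.2) →ₐ[k] ↥(DeltaSub k p.1.1 p.1.2)))
variable (rS : ∀ p q : PIdx, p ≤ q →
      (↥(DeltaSub k p.1.1 p.1.2) →ₐ[k] ↥(DeltaSub k q.1.1 q.1.2)))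

lemma eD_self (heD : eProp k eD) (p : PIdx) (h : p ≤ p) (x : ↥(DeltaSub k p.1.1 p.1.2)) :
    eD p p h x = x := by
  apply Subtype.ext
  rw [heD p p h x, emap_self]

lemma eD_comp (heD : eProp k eD) (p q r : PIdx) (hpq : p ≤ q) (hqr : q ≤ r)
    (x : ↥(DeltaSub k r.1.1 r.1.2)) :
    eD p q hpq (eD q r hqr x) = eD p r (hpq.trans hqr) x := by
  apply Subtype.ext
  rw [heD p q hpq, heD q r hqr, heD p r (hpq.trans hqr)]
  exact emap_comp k _ _ _ _ _ _ ((pidx_le_iff p q).1 hpq).1 ((pidx_le_iff p q).1 hpq).2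
    ((pidx_le_iff q r).1 hqr).1 ((pidx_le_iff q r).1 hqr).2 _

lemma rS_self (hrS : rSysProp k rS) (q : PIdx) (h : q ≤ q) (y : ↥(DeltaSub k q.1.1 q.1.2)) :
    rS q q h y = y := by
  refine adjoin_induction_sub (fun x hx => ?_) (fun r => ?_) (fun x y hx hy => ?_)
    (fun x y hx hy => ?_) y
  · obtain ⟨I, hI, hsub, rfl⟩ := hx
    have hempty : Finset.Icc (-(q.1.1 : ℤ)) (-(q.1.1 : ℤ) - 1) = (∅ : Finset ℤ) :=
      Finset.Icc_eq_empty (by omega)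
    have hcard : (Finset.Icc (-(q.1.1 : ℤ)) (-(q.1.1 : ℤ) - 1) ∪ I).card = q.1.1 := by
      rw [hempty, Finset.empty_union, hI]
    have hsub' : Finset.Icc (-(q.1.1 : ℤ)) (-(q.1.1 : ℤ) - 1) ∪ I ⊆
        Finset.Icc (-(q.1.1 : ℤ)) ((q.1.2 : ℤ) - 1) := by
      rw [hempty, Finset.empty_union]; exact hsub
    apply Subtype.ext
    rw [hrS q q h I hI hsub _ hcard hsub']
    exact dMinor_congr k q.1.1 q.1.2 _ I (by rw [hempty, Finset.empty_union]) hcard hsub' hI hsub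
  · exact AlgHom.commutes _ r
  · rw [map_add, hx, hy]
  · rw [map_mul, hx, hy]

lemma rS_comp (hrS : rSysProp k rS) (p q r : PIdx) (hpq : p ≤ q) (hqr : q ≤ r)
    (y : ↥(DeltaSub k p.1.1 p.1.2)) :
    rS q r hqr (rS p q hpq y) = rS p r (hpq.trans hqr) y := by
  refine adjoin_induction_sub (fun x hx => ?_) (fun c => ?_) (fun x y hx hy => ?_)
    (fun x y hx hy => ?_) y
  · obtain ⟨I, hI, hsub, rfl⟩ := hx
    obtain ⟨hm1, hn1⟩ := (pidx_le_iff p q).1 hpq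
    obtain ⟨hm2, hn2⟩ := (pidx_le_iff q r).1 hqr
    have hp1 := p.2.1
    -- first application
    have hcard1 := union_card p.1.1 p.1.2 q.1.1 hm1 I hI hsub
    have hsub1 := union_sub p.1.1 p.1.2 q.1.1 q.1.2 hm1 hn1 I hsub
    have step1 : rS p q hpq ⟨dMinor k p.1.1 p.1.2 I hI hsub, Algebra.subset_adjoin ⟨I, hI, hsub, rfl⟩⟩ =
        ⟨dMinor k q.1.1 q.1.2 _ hcard1 hsub1, dMinor_mem k _ _ _ hcard1 hsub1⟩ := by
      apply Subtype.ext
      exact hrS p q hpq I hI hsub _ hcard1 hsub1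
    rw [step1]
    set J1 := Finset.Icc (-(q.1.1 : ℤ)) (-(p.1.1 : ℤ) - 1) ∪ I with hJ1
    have hJ1sub : J1 ⊆ Finset.Icc (-(q.1.1 : ℤ)) ((q.1.2 : ℤ) - 1) := hsub1
    have hcard2 := union_card q.1.1 q.1.2 r.1.1 hm2 J1 hcard1 hJ1sub
    have hsub2 := union_sub q.1.1 q.1.2 r.1.1 r.1.2 hm2 hn2 J1 hJ1sub
    apply Subtype.ext
    rw [hrS q r hqr J1 hcard1 hJ1sub _ hcard2 hsub2]
    have hcard3 := union_card p.1.1 p.1.2 r.1.1 (hm1.trans hm2) I hI hsub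
    have hsub3 := union_sub p.1.1 p.1.2 r.1.1 r.1.2 (hm1.trans hm2) (hn1.trans hn2) I hsub
    rw [hrS p r (hpq.trans hqr) I hI hsub _ hcard3 hsub3]
    apply dMinor_congr
    ext a
    simp only [hJ1, Finset.mem_union, Finset.mem_Icc]
    constructor
    · rintro (h1 | (h1 | h1))
      · left; omega
      · left; omega
      · right; exact h1
    · rintro (h1 | h1)
      · rcases le_or_gt (-(q.1.1 : ℤ)) a with h2 | h2
        · right; left; omega
        · left; omega
      · right; right; exact h1
  · show rS q r hqr (rS p q hpq (algebraMap k ↥(DeltaSub k p.1.1 p.1.2) c)) =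
        rS p r (hpq.trans hqr) (algebraMap k ↥(DeltaSub k p.1.1 p.1.2) c)
    rw [AlgHom.commutes, AlgHom.commutes, AlgHom.commutes]
  · rw [map_add, map_add, hx, hy, map_add]
  · rw [map_mul, map_mul, hx, hy, map_mul]

end Aux3
section Aux4
variable (k : Type) [Field k]
variable (eD : ∀ p q : PIdx, p ≤ q →
      (↥(DeltaSub k q.1.1 q.1.2) →ₐ[k] ↥(DeltaSub k p.1.1 p.1.2)))
variable (rS : ∀ p q : PIdx, p ≤ q →
      (↥(DeltaSub k p.1.1 p.1.2) →ₐ[k] ↥(DeltaSub k q.1.1 q.1.2)))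

lemma er_id (heD : eProp k eD) (hrS : rSysProp k rS) (p q : PIdx) (h : p ≤ q)
    (y : ↥(DeltaSub k p.1.1 p.1.2)) :
    eD p q h (rS p q h y) = y := by
  refine adjoin_induction_sub (fun x hx => ?_) (fun c => ?_) (fun x y hx hy => ?_)
    (fun x y hx hy => ?_) y
  · obtain ⟨I, hI, hsub, rfl⟩ := hx
    obtain ⟨hm, hn⟩ := (pidx_le_iff p q).1 h
    have hcard := union_card p.1.1 p.1.2 q.1.1 hm I hI hsub
    have hsub1 := union_sub p.1.1 p.1.2 q.1.1 q.1.2 hm hn I hsub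
    have step1 : rS p q h ⟨dMinor k p.1.1 p.1.2 I hI hsub, Algebra.subset_adjoin ⟨I, hI, hsub, rfl⟩⟩ =
        ⟨dMinor k q.1.1 q.1.2 _ hcard hsub1, dMinor_mem k _ _ _ hcard hsub1⟩ :=
      Subtype.ext (hrS p q h I hI hsub _ hcard hsub1)
    rw [step1]
    apply Subtype.ext
    rw [heD p q h]
    exact emap_dMinor k p.1.1 p.1.2 q.1.1 q.1.2 hm hn I hI hsub hcard hsub1
  · show eD p q h (rS p q h (algebraMap k ↥(DeltaSub k p.1.1 p.1.2) c)) =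
        algebraMap k ↥(DeltaSub k p.1.1 p.1.2) c
    rw [AlgHom.commutes, AlgHom.commutes]
  · rw [map_add, map_add, hx, hy]
  · rw [map_mul, map_mul, hx, hy]

lemma indep (heD : eProp k eD) (hrS : rSysProp k rS) (p q r1 r2 : PIdx)
    (h1 : p ≤ r1) (h2 : q ≤ r1) (h3 : p ≤ r2) (h4 : q ≤ r2)
    (y : ↥(DeltaSub k q.1.1 q.1.2)) :
    eD p r1 h1 (rS q r1 h2 y) = eD p r2 h3 (rS q r2 h4 y) := by
  set r := psup r1 r2
  have ha1 : r1 ≤ r := le_psup_left _ _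
  have ha2 : r2 ≤ r := le_psup_right _ _
  have key : ∀ (ri : PIdx) (hi1 : p ≤ ri) (hi2 : q ≤ ri) (hir : ri ≤ r),
      eD p ri hi1 (rS q ri hi2 y) = eD p r (hi1.trans hir) (rS q r (hi2.trans hir) y) := by
    intro ri hi1 hi2 hir
    conv_lhs => rw [← er_id k eD rS heD hrS ri r hir (rS q ri hi2 y),
      rS_comp k rS hrS q ri r hi2 hir y]
    rw [eD_comp k eD heD p ri r hi1 hir]
  rw [key r1 h1 h2 ha1, key r2 h3 h4 ha2]

end Aux4

/-- there is a unique ring homomorphism `I : k[δ_∞] → k̂[δ_∞]` such that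
for all `(M,N) ≥ (m,n)` and `y ∈ k[δ_{M,N}]`, the `(m,n)`-component of `I(r_{(M,N)}(y))`
equals `e_{(M,N,m,n)}(y)`; moreover `I` is injective. -/
theorem stmt2 (k : Type) [Field k]
    (eD : ∀ p q : PIdx, p ≤ q →
      (↥(DeltaSub k q.1.1 q.1.2) →ₐ[k] ↥(DeltaSub k p.1.1 p.1.2)))
    (heD : eProp k eD)
    (rS : ∀ p q : PIdx, p ≤ q →
      (↥(DeltaSub k p.1.1 p.1.2) →ₐ[k] ↥(DeltaSub k q.1.1 q.1.2)))
    (hrS : rSysProp k rS) :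
    (∃! Ih : Ring.DirectLimit (fun p : PIdx => ↥(DeltaSub k p.1.1 p.1.2))
        (fun p q h => ⇑(rS p q h)) →+*
        ↥(ringInvLim (fun p : PIdx => ↥(DeltaSub k p.1.1 p.1.2))
          (fun p q h => (eD p q h).toRingHom)),
      ∀ (q p : PIdx) (h : p ≤ q) (y : ↥(DeltaSub k q.1.1 q.1.2)),
        ((Ih (Ring.DirectLimit.of (fun p : PIdx => ↥(DeltaSub k p.1.1 p.1.2))
            (fun p q h => ⇑(rS p q h)) q y) : ∀ p : PIdx, ↥(DeltaSub k p.1.1 p.1.2)) p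
          : MatRing k p.1.1 p.1.2) =
          Emap k p.1.1 p.1.2 q.1.1 q.1.2 (y : MatRing k q.1.1 q.1.2)) ∧
    (∀ Ih : Ring.DirectLimit (fun p : PIdx => ↥(DeltaSub k p.1.1 p.1.2))
        (fun p q h => ⇑(rS p q h)) →+*
        ↥(ringInvLim (fun p : PIdx => ↥(DeltaSub k p.1.1 p.1.2))
          (fun p q h => (eD p q h).toRingHom)),
      (∀ (q p : PIdx) (h : p ≤ q) (y : ↥(DeltaSub k q.1.1 q.1.2)),
        ((Ih (Ring.DirectLimit.of (fun p : PIdx => ↥(DeltaSub k p.1.1 p.1.2))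
            (fun p q h => ⇑(rS p q h)) q y) : ∀ p : PIdx, ↥(DeltaSub k p.1.1 p.1.2)) p
          : MatRing k p.1.1 p.1.2) =
          Emap k p.1.1 p.1.2 q.1.1 q.1.2 (y : MatRing k q.1.1 q.1.2)) →
      Function.Injective Ih) := by
  classical
  set G : PIdx → Type := fun p => ↥(DeltaSub k p.1.1 p.1.2) with hG
  -- the componentwise maps
  set F : ∀ q : PIdx, G q →+* (∀ p : PIdx, G p) := fun q => Pi.ringHom fun p =>
    ((eD p (psup p q) (le_psup_left p q)).toRingHom.comp
      (rS q (psup p q) (le_psup_right p q)).toRingHom) with hF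
  have hFapp : ∀ (q : PIdx) (y : G q) (p : PIdx),
      F q y p = eD p (psup p q) (le_psup_left p q) (rS q (psup p q) (le_psup_right p q) y) :=
    fun q y p => rfl
  have hmem : ∀ (q : PIdx) (y : G q),
      F q y ∈ ringInvLim G (fun p q h => (eD p q h).toRingHom) := by
    intro q y i j hij
    show eD i j hij (F q y j) = F q y i
    rw [hFapp, hFapp, eD_comp k eD heD i j (psup j q) hij (le_psup_left j q)]
    exact indep k eD rS heD hrS i q (psup j q) (psup i q)
      (hij.trans (le_psup_left j q)) (le_psup_right j q)
      (le_psup_left i q) (le_psup_right i q) y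
  set g : ∀ q : PIdx, G q →+* ↥(ringInvLim G (fun p q h => (eD p q h).toRingHom)) :=
    fun q => (F q).codRestrict _ (hmem q) with hg
  have Hg : ∀ (q q' : PIdx) (hqq' : q ≤ q') (y : G q), g q' (rS q q' hqq' y) = g q y := by
    intro q q' hqq' y
    apply Subtype.ext
    funext p
    show F q' (rS q q' hqq' y) p = F q y p
    rw [hFapp, hFapp, rS_comp k rS hrS q q' (psup p q') hqq' (le_psup_right p q')]
    exact indep k eD rS heD hrS p q (psup p q') (psup p q)
      (le_psup_left p q') (hqq'.trans (le_psup_right p q'))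
      (le_psup_left p q) (le_psup_right p q) y
  set Ih : Ring.DirectLimit G (fun p q h => ⇑(rS p q h)) →+*
      ↥(ringInvLim G (fun p q h => (eD p q h).toRingHom)) :=
    Ring.DirectLimit.lift G (fun p q h => ⇑(rS p q h)) _ g
      (fun q q' hqq' y => Hg q q' hqq' y) with hIh
  have spec : ∀ (Ih' : Ring.DirectLimit G (fun p q h => ⇑(rS p q h)) →+*
      ↥(ringInvLim G (fun p q h => (eD p q h).toRingHom))), Ih' = Ih →
      ∀ (q p : PIdx) (h : p ≤ q) (y : G q),
        ((Ih' (Ring.DirectLimit.of G (fun p q h => ⇑(rS p q h)) q y) :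
          ∀ p : PIdx, G p) p : MatRing k p.1.1 p.1.2) =
          Emap k p.1.1 p.1.2 q.1.1 q.1.2 (y : MatRing k q.1.1 q.1.2) := by
    rintro _ rfl q p h y
    rw [hIh]
    rw [show (Ring.DirectLimit.lift G (fun p q h => ⇑(rS p q h)) _ g
      (fun q q' hqq' y => Hg q q' hqq' y)) (Ring.DirectLimit.of G (fun p q h => ⇑(rS p q h)) q y)
      = g q y from Ring.DirectLimit.lift_of _ _ _ q y]
    show ((F q y p : G p) : MatRing k p.1.1 p.1.2) = _
    rw [hFapp]
    have h1 := indep k eD rS heD hrS p q (psup p q) q (le_psup_left p q)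
      (le_psup_right p q) h le_rfl y
    rw [h1, rS_self k rS hrS q le_rfl y]
    exact heD p q h y
  refine ⟨⟨Ih, spec Ih rfl, ?_⟩, ?_⟩
  · -- uniqueness
    intro Ih' hIh'
    refine RingHom.ext fun z => ?_
    obtain ⟨q, y, rfl⟩ := Ring.DirectLimit.exists_of z
    apply Subtype.ext
    funext p
    apply Subtype.ext
    have hof : Ring.DirectLimit.of G (fun p q h => ⇑(rS p q h)) (psup p q)
        (rS q (psup p q) (le_psup_right p q) y) =
        Ring.DirectLimit.of G (fun p q h => ⇑(rS p q h)) q y :=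
      Ring.DirectLimit.of_f (G := G) (f := fun p q h => ⇑(rS p q h)) (le_psup_right p q) y
    have e1 := hIh' (psup p q) p (le_psup_left p q) (rS q (psup p q) (le_psup_right p q) y)
    have e2 := spec Ih rfl (psup p q) p (le_psup_left p q)
      (rS q (psup p q) (le_psup_right p q) y)
    rw [hof] at e1 e2
    exact e1.trans e2.symm
  · -- injectivity
    intro Ih' hIh'
    rw [injective_iff_map_eq_zero]
    intro z hz
    obtain ⟨q, y, rfl⟩ := Ring.DirectLimit.exists_of z
    have e1 := hIh' q q le_rfl y
    rw [hz] at e1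
    have : (y : MatRing k q.1.1 q.1.2) = 0 := by
      rw [← emap_self k q.1.1 q.1.2 (y : MatRing k q.1.1 q.1.2), ← e1]
      rfl
    have hy : y = 0 := Subtype.ext this
    rw [hy, map_zero]

end
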